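/- Let K be a field of characteristic 2 and let a₂, a₀, b₆, b₄, b₀ ∈ K with b₆ ≠ 0 and (a₀, a₂) ≠ (0, 0). Then the polynomial f(X, Y) = Y² + (a₂X² + a₀)Y + b₆X⁶ + b₄X⁴ + b₀ ∈ K[X, Y] is absolutely irreducible, i.e., there is no polynomial c(X) ∈ K̄[X] with f(X, c(X)) = 0 over the algebraic closure K̄ of K. -/

import Mathlib

open Polynomial

/-- Let `K` be a field of characteristic 2 and `a₂ a₀ b₆ b₄ b₀ ∈ K` with
`b₆ ≠ 0` and `(a₀, a₂) ≠ (0, 0)`. Then `f(X,Y) = Y² + (a₂X² + a₀)Y + b₆X⁶ + b₄X⁴ + b₀`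
is absolutely irreducible: there is no polynomial `c(X)` over the algebraic closure `K̄`
of `K` with `f(X, c(X)) = 0`. -/
theorem stmt9 (K : Type) [Field K] (hchar : ringChar K = 2)
    (a₂ a₀ b₆ b₄ b₀ : K) (hb : b₆ ≠ 0) (ha : ¬ (a₀ = 0 ∧ a₂ = 0)) :
    ¬ ∃ c : Polynomial (AlgebraicClosure K),
      c ^ 2
        + (Polynomial.C (algebraMap K (AlgebraicClosure K) a₂) * Polynomial.X ^ 2
            + Polynomial.C (algebraMap K (AlgebraicClosure K) a₀)) * c
        + (Polynomial.C (algebraMap K (AlgebraicClosure K) b₆) * Polynomial.X ^ 6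
            + Polynomial.C (algebraMap K (AlgebraicClosure K) b₄) * Polynomial.X ^ 4
            + Polynomial.C (algebraMap K (AlgebraicClosure K) b₀)) = 0 := by
  set L := AlgebraicClosure K
  have hK : CharP K 2 := hchar ▸ ringChar.charP K
  have hL : CharP L 2 := charP_of_injective_algebraMap (algebraMap K L).injective 2
  have hfact : Fact (Nat.Prime 2) := ⟨Nat.prime_two⟩
  set φ := algebraMap K L with hφ
  have hinj : Function.Injective φ := (algebraMap K L).injective
  rintro ⟨c, h⟩
  -- coefficients of squares
  have hsq : ∀ n : ℕ, (c ^ 2).coeff n = if 2 ∣ n then (c.coeff (n / 2)) ^ 2 else 0 := by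
    intro n
    have := Polynomial.map_frobenius_expand (p := 2) (R := L) c
    calc (c ^ 2).coeff n = ((Polynomial.expand L 2 c).map (frobenius L 2)).coeff n := by
          rw [this]
      _ = frobenius L 2 ((Polynomial.expand L 2 c).coeff n) := by rw [coeff_map]
      _ = if 2 ∣ n then (c.coeff (n / 2)) ^ 2 else 0 := by
          rw [Polynomial.coeff_expand (by norm_num)]
          split <;> simp [frobenius_def]
  -- coefficients of the middle term
  have hmid : ∀ n : ℕ, ((C (φ a₂) * X ^ 2 + C (φ a₀)) * c).coeff (n + 2)
      = φ a₂ * c.coeff n + φ a₀ * c.coeff (n + 2) := by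
    intro n
    rw [add_mul, coeff_add, mul_assoc, coeff_C_mul, coeff_C_mul, coeff_X_pow_mul]
  have H : ∀ n : ℕ, ((c ^ 2).coeff n
      + ((C (φ a₂) * X ^ 2 + C (φ a₀)) * c).coeff n
      + (C (φ b₆) * X ^ 6 + C (φ b₄) * X ^ 4 + C (φ b₀)).coeff n) = 0 := by
    intro n
    have := congrArg (fun p => Polynomial.coeff p n) h
    simpa using this
  -- degree bound : natDegree c ≤ 3
  have hd : c.natDegree ≤ 3 := by
    by_contra hgt
    push_neg at hgt
    set d := c.natDegree with hdd
    have h4 : 4 ≤ d := hgt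
    have e1 : 2 * d = (2 * d - 2) + 2 := by omega
    have H2d := H (2 * d)
    rw [hsq, if_pos ⟨d, by ring⟩, Nat.mul_div_cancel_left _ (by norm_num)] at H2d
    rw [e1, hmid] at H2d
    have z1 : c.coeff (2 * d - 2) = 0 :=
      coeff_eq_zero_of_natDegree_lt (by omega)
    have z2 : c.coeff (2 * d - 2 + 2) = 0 :=
      coeff_eq_zero_of_natDegree_lt (by omega)
    have z3 : (C (φ b₆) * X ^ 6 + C (φ b₄) * X ^ 4 + C (φ b₀)).coeff (2 * d - 2 + 2) = 0 := by
      simp only [coeff_add, coeff_C_mul, coeff_X_pow, coeff_C]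
      have h6 : ¬ (2 * d - 2 + 2 = 6) := by omega
      have h4' : ¬ (2 * d - 2 + 2 = 4) := by omega
      have h0 : ¬ (2 * d - 2 + 2 = 0) := by omega
      simp [h6, h4', h0]
    rw [z1, z2, z3] at H2d
    simp at H2d
    have : c.leadingCoeff = 0 := by rwa [Polynomial.leadingCoeff]
    rw [Polynomial.leadingCoeff_eq_zero] at this
    rw [this] at hdd
    simp at hdd
    omega
  have z4 : c.coeff 4 = 0 := coeff_eq_zero_of_natDegree_lt (by omega)
  have z5 : c.coeff 5 = 0 := coeff_eq_zero_of_natDegree_lt (by omega)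
  have z6 : c.coeff 6 = 0 := coeff_eq_zero_of_natDegree_lt (by omega)
  -- coefficient 6 : c₃² = b₆, so c₃ ≠ 0
  have H6 := H 6
  rw [hsq, if_pos ⟨3, rfl⟩, show (6:ℕ)/2 = 3 from rfl,
      show (6:ℕ) = 4 + 2 from rfl, hmid] at H6
  rw [show (4:ℕ)+2 = 6 from rfl, z4, z6] at H6
  have hg6 : (C (φ b₆) * X ^ 6 + C (φ b₄) * X ^ 4 + C (φ b₀)).coeff 6 = φ b₆ := by
    simp [coeff_add, coeff_C_mul, coeff_X_pow, coeff_C]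
  rw [hg6] at H6
  have hc3 : c.coeff 3 ≠ 0 := by
    intro h0
    rw [h0] at H6
    simp at H6
    exact hb (hinj (by simpa using H6))
  -- coefficient 5 : a₂ = 0
  have H5 := H 5
  rw [hsq, if_neg (by norm_num),
      show (5:ℕ) = 3 + 2 from rfl, hmid] at H5
  rw [show (3:ℕ)+2 = 5 from rfl, z5] at H5
  have hg5 : (C (φ b₆) * X ^ 6 + C (φ b₄) * X ^ 4 + C (φ b₀)).coeff 5 = 0 := by
    simp [coeff_add, coeff_C_mul, coeff_X_pow, coeff_C]
  rw [hg5] at H5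
  simp at H5
  have ha2 : a₂ = 0 := by
    rcases H5 with h' | h'
    · exact hinj (by simpa using h')
    · exact absurd h' hc3
  -- coefficient 3 : a₀ = 0
  have H3 := H 3
  rw [hsq, if_neg (by norm_num), show (3:ℕ) = 1 + 2 from rfl, hmid] at H3
  rw [show (1:ℕ)+2 = 3 from rfl] at H3
  have hg3 : (C (φ b₆) * X ^ 6 + C (φ b₄) * X ^ 4 + C (φ b₀)).coeff 3 = 0 := by
    simp [coeff_add, coeff_C_mul, coeff_X_pow, coeff_C]
  rw [hg3, ha2] at H3
  simp at H3
  have ha0 : a₀ = 0 := by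
    rcases H3 with h' | h'
    · exact hinj (by simpa using h')
    · exact absurd h' hc3
  exact ha ⟨ha0, ha2⟩
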